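/- arXiv:2406.00462 — 2 statements merged into one kernel-verified Lean document; each statement's English description precedes it below -/
import Mathlib

section
/- Let α > 0 and let p satisfy −1 < p < 2α − 1. Set a = (p+1)/(2α) and b = (2α−1−p)/(2α), so a, b ∈ (0,1) and a + b = 1. Then for every ξ ∈ ℝ³ with ξ ≠ 0 and every t ≥ 0, ∫₀ᵗ |ξ|^{p+1} e^{−(t−τ)|ξ|^{2α}} (1+τ)^{−b} dτ ≤ (a/e)^a · ∫₀¹ (1−y)^{−a} y^{−b} dy. -/
open MeasureTheory Real

lemma aux_ae_ne (c : ℝ) : ∀ᵐ x : ℝ, x ≠ c := by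
  rw [ae_iff]
  simp only [not_not, Set.setOf_eq_eq_singleton]
  exact Real.volume_singleton

lemma aux_u {a : ℝ} (ha : 0 < a) {u : ℝ} (hu : 0 < u) :
    u ^ a * Real.exp (-u) ≤ a ^ a * Real.exp (-a) := by
  rw [Real.rpow_def_of_pos hu, Real.rpow_def_of_pos ha, ← Real.exp_add, ← Real.exp_add,
    Real.exp_le_exp]
  have h := Real.log_le_sub_one_of_pos (div_pos hu ha)
  rw [Real.log_div hu.ne' ha.ne'] at h
  have h2 : a * (Real.log u - Real.log a) ≤ a * (u / a - 1) :=
    mul_le_mul_of_nonneg_left h ha.le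
  have h3 : a * (u / a - 1) = u - a := by field_simp
  rw [h3] at h2
  nlinarith [h2]

lemma aux_meas (a b c d : ℝ) :
    Measurable (fun y : ℝ => (c - y) ^ (-a) * (d + y) ^ (-b)) :=
  ((measurable_const.sub measurable_id).pow_const _).mul
    ((measurable_const.add measurable_id).pow_const _)

lemma aux_beta_integrable {a b : ℝ} (ha0 : 0 < a) (ha1 : a < 1) (hb0 : 0 < b) (hb1 : b < 1) :
    IntervalIntegrable (fun y : ℝ => (1 - y) ^ (-a) * y ^ (-b)) volume 0 1 := by
  have hmeas : AEStronglyMeasurable (fun y : ℝ => (1 - y) ^ (-a) * y ^ (-b))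
      (volume : Measure ℝ) :=
    (((measurable_const.sub measurable_id).pow_const _).mul
      (measurable_id.pow_const _)).aestronglyMeasurable
  have h1 : IntervalIntegrable (fun y : ℝ => (1 - y) ^ (-a) * y ^ (-b)) volume 0 (1/2) := by
    have hg : IntervalIntegrable (fun y : ℝ => ((1:ℝ)/2) ^ (-a) * y ^ (-b)) volume 0 (1/2) :=
      (intervalIntegral.intervalIntegrable_rpow' (by linarith)).const_mul _
    refine hg.mono_fun (hmeas.restrict) ?_
    rw [Filter.EventuallyLE, ae_restrict_iff' measurableSet_uIoc]
    refine Filter.Eventually.of_forall fun y hy => ?_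
    rw [Set.uIoc_of_le (by norm_num : (0:ℝ) ≤ 1/2)] at hy
    have hy0 : 0 < y := hy.1
    have hy2 : y ≤ 1/2 := hy.2
    have hb1y : (0:ℝ) < 1 - y := by linarith
    have hfb : (1 - y) ^ (-a) ≤ ((1:ℝ)/2) ^ (-a) :=
      Real.rpow_le_rpow_of_nonpos (by norm_num) (by linarith) (by linarith)
    simp only [Real.norm_eq_abs]
    rw [abs_of_nonneg (mul_nonneg (Real.rpow_nonneg hb1y.le _) (Real.rpow_nonneg hy0.le _)),
      abs_of_nonneg (mul_nonneg (Real.rpow_nonneg (by norm_num) _) (Real.rpow_nonneg hy0.le _))]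
    exact mul_le_mul_of_nonneg_right hfb (Real.rpow_nonneg hy0.le _)
  have h2 : IntervalIntegrable (fun y : ℝ => (1 - y) ^ (-a) * y ^ (-b)) volume (1/2) 1 := by
    have hg0 : IntervalIntegrable (fun y : ℝ => (1 - y) ^ (-a)) volume (1/2) 1 := by
      have h := ((intervalIntegral.intervalIntegrable_rpow' (a := 0) (b := 1/2)
        (r := -a) (by linarith)).comp_sub_left 1).symm
      simp only [show (1:ℝ) - 1/2 = 1/2 by norm_num, show (1:ℝ) - 0 = 1 by norm_num] at h
      exact h
    have hg : IntervalIntegrable (fun y : ℝ => (1 - y) ^ (-a) * ((1:ℝ)/2) ^ (-b)) volume (1/2) 1 :=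
      hg0.mul_const _
    refine hg.mono_fun (hmeas.restrict) ?_
    rw [Filter.EventuallyLE, ae_restrict_iff' measurableSet_uIoc]
    refine Filter.Eventually.of_forall fun y hy => ?_
    rw [Set.uIoc_of_le (by norm_num : (1:ℝ)/2 ≤ 1)] at hy
    have hy0 : (0:ℝ) < y := by linarith [hy.1]
    have hfb : y ^ (-b) ≤ ((1:ℝ)/2) ^ (-b) :=
      Real.rpow_le_rpow_of_nonpos (by norm_num) (by linarith [hy.1]) (by linarith)
    simp only [Real.norm_eq_abs]
    rw [abs_of_nonneg (mul_nonneg (Real.rpow_nonneg (by linarith [hy.2]) _)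
        (Real.rpow_nonneg hy0.le _)),
      abs_of_nonneg (mul_nonneg (Real.rpow_nonneg (by linarith [hy.2]) _)
        (Real.rpow_nonneg (by norm_num) _))]
    exact mul_le_mul_of_nonneg_left hfb (Real.rpow_nonneg (by linarith [hy.2]) _)
  exact h1.trans h2

lemma aux_G_integrable {a b t : ℝ} (ha0 : 0 < a) (ha1 : a < 1) (hb0 : 0 < b) (ht : 0 ≤ t) :
    IntervalIntegrable (fun τ : ℝ => (t - τ) ^ (-a) * (1 + τ) ^ (-b)) volume 0 t := by
  have hbase : IntervalIntegrable (fun τ : ℝ => (t - τ) ^ (-a)) volume 0 t := by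
    have := (intervalIntegral.intervalIntegrable_rpow' (a := 0) (b := t)
      (r := -a) (by linarith)).comp_sub_left t
    simpa using this.symm
  refine hbase.mono_fun ((aux_meas a b t 1).aestronglyMeasurable.restrict) ?_
  rw [Filter.EventuallyLE, ae_restrict_iff' measurableSet_uIoc]
  refine Filter.Eventually.of_forall fun τ hτ => ?_
  rw [Set.uIoc_of_le ht] at hτ
  have hτ0 : 0 < τ := hτ.1
  have hτt : τ ≤ t := hτ.2
  have h1τ : (0:ℝ) < 1 + τ := by linarith
  have hle1 : (1 + τ) ^ (-b) ≤ 1 :=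
    Real.rpow_le_one_of_one_le_of_nonpos (by linarith) (by linarith)
  simp only [Real.norm_eq_abs]
  rw [abs_of_nonneg (mul_nonneg (Real.rpow_nonneg (by linarith) _) (Real.rpow_nonneg h1τ.le _)),
    abs_of_nonneg (Real.rpow_nonneg (by linarith : (0:ℝ) ≤ t - τ) _)]
  calc (t - τ) ^ (-a) * (1 + τ) ^ (-b) ≤ (t - τ) ^ (-a) * 1 :=
        mul_le_mul_of_nonneg_left hle1 (Real.rpow_nonneg (by linarith) _)
    _ = (t - τ) ^ (-a) := mul_one _

lemma aux_betaB {a b : ℝ} (ha0 : 0 < a) (ha1 : a < 1) (hb0 : 0 < b) (hb1 : b < 1)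
    (hab : a + b = 1) {t : ℝ} (ht : 0 ≤ t) :
    ∫ τ in (0:ℝ)..t, (t - τ) ^ (-a) * (1 + τ) ^ (-b) ≤
      ∫ y in (0:ℝ)..1, (1 - y) ^ (-a) * y ^ (-b) := by
  have hI1 := aux_beta_integrable ha0 ha1 hb0 hb1
  have hG := aux_G_integrable ha0 ha1 hb0 ht
  -- lower bound for the beta integral : 1/b ≤ B
  have hBlow : 1 / b ≤ ∫ y in (0:ℝ)..1, (1 - y) ^ (-a) * y ^ (-b) := by
    have h0 : IntervalIntegrable (fun y : ℝ => (1 - y) ^ (-a)) volume 0 1 := by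
      have := (intervalIntegral.intervalIntegrable_rpow' (a := 0) (b := 1)
        (r := -a) (by linarith)).comp_sub_left 1
      simpa using this.symm
    have heq : ∫ y in (0:ℝ)..1, (1 - y) ^ (-a) = 1 / b := by
      rw [show (fun y : ℝ => (1 - y) ^ (-a)) = fun y : ℝ => ((fun x : ℝ => x ^ (-a)) (1 - y))
        from rfl, intervalIntegral.integral_comp_sub_left (fun x : ℝ => x ^ (-a)) 1]
      norm_num
      rw [integral_rpow (Or.inl (by linarith))]
      rw [Real.zero_rpow (by linarith : -a + 1 ≠ 0), Real.one_rpow]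
      rw [show -a + 1 = b by linarith]
      norm_num
    rw [← heq]
    refine intervalIntegral.integral_mono_ae_restrict (by norm_num) h0 hI1 ?_
    filter_upwards [ae_restrict_of_ae (aux_ae_ne 0), ae_restrict_mem measurableSet_Icc]
      with y hy0 hy
    have hy0' : 0 < y := lt_of_le_of_ne hy.1 (Ne.symm hy0)
    have h1 : (1:ℝ) ≤ y ^ (-b) :=
      Real.one_le_rpow_of_pos_of_le_one_of_nonpos hy0' hy.2 (by linarith)
    calc (1 - y) ^ (-a) = (1 - y) ^ (-a) * 1 := (mul_one _).symm
      _ ≤ (1 - y) ^ (-a) * y ^ (-b) :=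
        mul_le_mul_of_nonneg_left h1 (Real.rpow_nonneg (by linarith [hy.2]) _)
  rcases le_or_gt t 1 with htle | htgt
  · -- small time: bound (1+τ)^(-b) ≤ 1
    have hbase : IntervalIntegrable (fun τ : ℝ => (t - τ) ^ (-a)) volume 0 t := by
      have := (intervalIntegral.intervalIntegrable_rpow' (a := 0) (b := t)
        (r := -a) (by linarith)).comp_sub_left t
      simpa using this.symm
    have h1 : ∫ τ in (0:ℝ)..t, (t - τ) ^ (-a) * (1 + τ) ^ (-b) ≤
        ∫ τ in (0:ℝ)..t, (t - τ) ^ (-a) := by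
      refine intervalIntegral.integral_mono_on ht hG hbase fun τ hτ => ?_
      have hle1 : (1 + τ) ^ (-b) ≤ 1 :=
        Real.rpow_le_one_of_one_le_of_nonpos (by linarith [hτ.1]) (by linarith)
      calc (t - τ) ^ (-a) * (1 + τ) ^ (-b) ≤ (t - τ) ^ (-a) * 1 :=
            mul_le_mul_of_nonneg_left hle1 (Real.rpow_nonneg (by linarith [hτ.2]) _)
        _ = (t - τ) ^ (-a) := mul_one _
    have h2 : ∫ τ in (0:ℝ)..t, (t - τ) ^ (-a) = t ^ b / b := by
      rw [show (fun τ : ℝ => (t - τ) ^ (-a)) = fun τ : ℝ => ((fun x : ℝ => x ^ (-a)) (t - τ))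
        from rfl, intervalIntegral.integral_comp_sub_left (fun x : ℝ => x ^ (-a)) t]
      norm_num
      rw [integral_rpow (Or.inl (by linarith))]
      rw [Real.zero_rpow (by linarith : -a + 1 ≠ 0)]
      rw [show -a + 1 = b by linarith, sub_zero]
    have h3 : t ^ b / b ≤ 1 / b :=
      (div_le_div_iff_of_pos_right hb0).mpr (Real.rpow_le_one ht htle hb0.le)
    linarith
  · -- large time: substitution τ = t y
    have ht0 : 0 < t := by linarith
    have hsub : ∫ y in (0:ℝ)..1, t * ((t - t * y) ^ (-a) * (1 + t * y) ^ (-b)) =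
        ∫ τ in (0:ℝ)..t, (t - τ) ^ (-a) * (1 + τ) ^ (-b) := by
      rw [intervalIntegral.integral_const_mul]
      have h := intervalIntegral.mul_integral_comp_mul_left
        (f := fun x : ℝ => (t - x) ^ (-a) * (1 + x) ^ (-b)) (c := t) (a := 0) (b := 1)
      simpa using h
    rw [← hsub]
    have hGy : IntervalIntegrable
        (fun y : ℝ => t * ((t - t * y) ^ (-a) * (1 + t * y) ^ (-b))) volume 0 1 := by
      have := (hG.comp_mul_left (c := t)).const_mul t
      simpa [div_self ht0.ne'] using this
    refine intervalIntegral.integral_mono_ae_restrict (by norm_num) hGy hI1 ?_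
    filter_upwards [ae_restrict_of_ae (aux_ae_ne 0), ae_restrict_mem measurableSet_Icc]
      with y hy0 hy
    have hy0' : 0 < y := lt_of_le_of_ne hy.1 (Ne.symm hy0)
    have hy1 : y ≤ 1 := hy.2
    have h1y : (0:ℝ) ≤ 1 - y := by linarith
    have hty : 0 < t * y := mul_pos ht0 hy0'
    have hstep : (1 + t * y) ^ (-b) ≤ (t * y) ^ (-b) :=
      Real.rpow_le_rpow_of_nonpos hty (by linarith) (by linarith)
    have hfac : t * t ^ (-a) * t ^ (-b) = 1 := by
      nth_rewrite 1 [← Real.rpow_one t]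
      rw [← Real.rpow_add ht0, ← Real.rpow_add ht0,
        show (1:ℝ) + -a + -b = 0 by linarith, Real.rpow_zero]
    calc t * ((t - t * y) ^ (-a) * (1 + t * y) ^ (-b))
        ≤ t * ((t - t * y) ^ (-a) * (t * y) ^ (-b)) := by
          apply mul_le_mul_of_nonneg_left _ ht0.le
          exact mul_le_mul_of_nonneg_left hstep
            (Real.rpow_nonneg (by nlinarith : (0:ℝ) ≤ t - t * y) _)
      _ = (t * t ^ (-a) * t ^ (-b)) * ((1 - y) ^ (-a) * y ^ (-b)) := by
          rw [show t - t * y = t * (1 - y) by ring,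
            Real.mul_rpow ht0.le h1y, Real.mul_rpow ht0.le hy0'.le]
          ring
      _ = (1 - y) ^ (-a) * y ^ (-b) := by rw [hfac, one_mul]

theorem stmt_5 (α p a b : ℝ) (hα : 0 < α) (hp1 : -1 < p) (hp2 : p < 2 * α - 1)
    (ha : a = (p + 1) / (2 * α)) (hb : b = (2 * α - 1 - p) / (2 * α)) :
    ∀ ξ : EuclideanSpace ℝ (Fin 3), ξ ≠ 0 → ∀ t : ℝ, 0 ≤ t →
      ∫ τ in (0:ℝ)..t,
          ‖ξ‖ ^ (p + 1) * Real.exp (-(t - τ) * ‖ξ‖ ^ (2 * α)) * (1 + τ) ^ (-b) ≤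
        (a / Real.exp 1) ^ a * ∫ y in (0:ℝ)..1, (1 - y) ^ (-a) * y ^ (-b) := by
  intro ξ hξ t ht
  have h2α : (0:ℝ) < 2 * α := by linarith
  have ha0 : 0 < a := ha ▸ div_pos (by linarith) h2α
  have ha1 : a < 1 := by rw [ha, div_lt_one h2α]; linarith
  have hb0 : 0 < b := hb ▸ div_pos (by linarith) h2α
  have hb1 : b < 1 := by rw [hb, div_lt_one h2α]; linarith
  have hab : a + b = 1 := by rw [ha, hb]; field_simp; ring
  have hr : 0 < ‖ξ‖ := norm_pos_iff.mpr hξ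
  have hC : 0 ≤ (a / Real.exp 1) ^ a :=
    Real.rpow_nonneg (div_nonneg ha0.le (Real.exp_pos 1).le) a
  have hx : 0 < ‖ξ‖ ^ (2 * α) := Real.rpow_pos_of_pos hr _
  -- pointwise bound on (0, t)
  have hpt : ∀ τ : ℝ, 0 ≤ τ → τ < t →
      ‖ξ‖ ^ (p + 1) * Real.exp (-(t - τ) * ‖ξ‖ ^ (2 * α)) * (1 + τ) ^ (-b) ≤
        (a / Real.exp 1) ^ a * ((t - τ) ^ (-a) * (1 + τ) ^ (-b)) := by
    intro τ hτ0 hτt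
    have hs : 0 < t - τ := by linarith
    have hkey : ‖ξ‖ ^ (p + 1) * Real.exp (-(t - τ) * ‖ξ‖ ^ (2 * α)) ≤
        (a / Real.exp 1) ^ a * (t - τ) ^ (-a) := by
      have hrp : ‖ξ‖ ^ (p + 1) = (‖ξ‖ ^ (2 * α)) ^ a := by
        rw [← Real.rpow_mul hr.le, show 2 * α * a = p + 1 by rw [ha]; field_simp]
      have hu := aux_u ha0 (mul_pos hs hx)
      have hCe : (a / Real.exp 1) ^ a = a ^ a * Real.exp (-a) := by
        rw [Real.div_rpow ha0.le (Real.exp_pos 1).le, Real.exp_one_rpow, Real.exp_neg,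
          div_eq_mul_inv]
      have hxa : (‖ξ‖ ^ (2 * α)) ^ a =
          (t - τ) ^ (-a) * ((t - τ) * ‖ξ‖ ^ (2 * α)) ^ a := by
        rw [Real.mul_rpow hs.le hx.le, ← mul_assoc, ← Real.rpow_add hs]
        norm_num
      rw [hrp, hxa, hCe]
      have : -(t - τ) * ‖ξ‖ ^ (2 * α) = -((t - τ) * ‖ξ‖ ^ (2 * α)) := by ring
      rw [this]
      calc (t - τ) ^ (-a) * ((t - τ) * ‖ξ‖ ^ (2 * α)) ^ a *
            Real.exp (-((t - τ) * ‖ξ‖ ^ (2 * α)))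
          = (t - τ) ^ (-a) * (((t - τ) * ‖ξ‖ ^ (2 * α)) ^ a *
            Real.exp (-((t - τ) * ‖ξ‖ ^ (2 * α)))) := by ring
        _ ≤ (t - τ) ^ (-a) * (a ^ a * Real.exp (-a)) :=
            mul_le_mul_of_nonneg_left hu (Real.rpow_nonneg hs.le _)
        _ = a ^ a * Real.exp (-a) * (t - τ) ^ (-a) := by ring
    calc ‖ξ‖ ^ (p + 1) * Real.exp (-(t - τ) * ‖ξ‖ ^ (2 * α)) * (1 + τ) ^ (-b)
        ≤ (a / Real.exp 1) ^ a * (t - τ) ^ (-a) * (1 + τ) ^ (-b) :=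
          mul_le_mul_of_nonneg_right hkey (Real.rpow_nonneg (by linarith) _)
      _ = (a / Real.exp 1) ^ a * ((t - τ) ^ (-a) * (1 + τ) ^ (-b)) := by ring
  -- integrability of F (continuous)
  have hFcont : ContinuousOn
      (fun τ : ℝ => ‖ξ‖ ^ (p + 1) * Real.exp (-(t - τ) * ‖ξ‖ ^ (2 * α)) * (1 + τ) ^ (-b))
      (Set.uIcc 0 t) := by
    apply ContinuousOn.mul
    · exact (continuous_const.mul (Real.continuous_exp.comp
        (((continuous_const.sub continuous_id).neg).mul continuous_const))).continuousOn
    · apply ContinuousOn.rpow_const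
      · exact (continuous_const.add continuous_id).continuousOn
      · intro x hx'
        rw [Set.uIcc_of_le ht] at hx'
        exact Or.inl (ne_of_gt (show (0:ℝ) < 1 + x from by linarith [hx'.1]))
  have hFint : IntervalIntegrable
      (fun τ : ℝ => ‖ξ‖ ^ (p + 1) * Real.exp (-(t - τ) * ‖ξ‖ ^ (2 * α)) * (1 + τ) ^ (-b))
      volume 0 t := hFcont.intervalIntegrable
  have hG := aux_G_integrable ha0 ha1 hb0 ht
  have hGint : IntervalIntegrable
      (fun τ : ℝ => (a / Real.exp 1) ^ a * ((t - τ) ^ (-a) * (1 + τ) ^ (-b))) volume 0 t :=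
    hG.const_mul _
  have step1 : ∫ τ in (0:ℝ)..t,
      ‖ξ‖ ^ (p + 1) * Real.exp (-(t - τ) * ‖ξ‖ ^ (2 * α)) * (1 + τ) ^ (-b) ≤
      ∫ τ in (0:ℝ)..t, (a / Real.exp 1) ^ a * ((t - τ) ^ (-a) * (1 + τ) ^ (-b)) := by
    refine intervalIntegral.integral_mono_ae_restrict ht hFint hGint ?_
    filter_upwards [ae_restrict_of_ae (aux_ae_ne t), ae_restrict_mem measurableSet_Icc]
      with τ hτt hτ
    exact hpt τ hτ.1 (lt_of_le_of_ne hτ.2 hτt)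
  have step2 : ∫ τ in (0:ℝ)..t, (a / Real.exp 1) ^ a * ((t - τ) ^ (-a) * (1 + τ) ^ (-b)) =
      (a / Real.exp 1) ^ a * ∫ τ in (0:ℝ)..t, (t - τ) ^ (-a) * (1 + τ) ^ (-b) :=
    intervalIntegral.integral_const_mul _ _
  have step3 := aux_betaB ha0 ha1 hb0 hb1 hab ht
  calc ∫ τ in (0:ℝ)..t,
        ‖ξ‖ ^ (p + 1) * Real.exp (-(t - τ) * ‖ξ‖ ^ (2 * α)) * (1 + τ) ^ (-b)
      ≤ ∫ τ in (0:ℝ)..t, (a / Real.exp 1) ^ a * ((t - τ) ^ (-a) * (1 + τ) ^ (-b)) := step1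
    _ = (a / Real.exp 1) ^ a * ∫ τ in (0:ℝ)..t, (t - τ) ^ (-a) * (1 + τ) ^ (-b) := step2
    _ ≤ (a / Real.exp 1) ^ a * ∫ y in (0:ℝ)..1, (1 - y) ^ (-a) * y ^ (-b) :=
        mul_le_mul_of_nonneg_left step3 hC
end

section
/- Let α ∈ (0, 5/4) and let p satisfy 6α − 6 ≤ p < 2α − 1 and p > −1. Set a = (p+1)/(2α) and b = (2α−1−p)/(2α). Let M, K > 0, let U₀ : ℝ³ → ℂ be measurable with |U₀(ξ)| ≤ M |ξ|^{−p} for all ξ ≠ 0, let g : [0,∞) → [0,∞) satisfy g(τ) ≤ K (1+τ)^{−(5−4α)/(2α)} for all τ ≥ 0, and let U : ℝ³ × [0,∞) → ℂ satisfy |U(ξ,t)| ≤ |U₀(ξ)| + ∫₀ᵗ |ξ| e^{−(t−τ)|ξ|^{2α}} g(τ) dτ for all ξ ≠ 0 and t ≥ 0. Then sup_{t ≥ 0} sup_{ξ ≠ 0} |ξ|^p |U(ξ,t)| ≤ M + K (a/e)^a ∫₀¹ (1−y)^{−a} y^{−b} dy. -/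
open MeasureTheory Real

lemma aux1 {a r : ℝ} (ha : 0 < a) (hr : 0 < r) :
    r ^ a * Real.exp (-r) ≤ (a / Real.exp 1) ^ a := by
  rw [Real.rpow_def_of_pos hr, Real.rpow_def_of_pos (by positivity), ← Real.exp_add]
  apply Real.exp_le_exp.2
  have h1 : Real.log (r / a) ≤ r / a - 1 := Real.log_le_sub_one_of_pos (by positivity)
  rw [Real.log_div hr.ne' ha.ne'] at h1
  rw [Real.log_div ha.ne' (Real.exp_ne_zero 1), Real.log_exp]
  have h2 : a * (Real.log r - Real.log a) ≤ a * (r / a - 1) :=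
    mul_le_mul_of_nonneg_left h1 ha.le
  have h3 : a * (r / a) = r := by field_simp
  nlinarith [h2, h3]

lemma betaInt' {a b : ℝ} (t : ℝ) (ha1 : a < 1) (hb1 : b < 1) (ht : 0 < t) :
    IntervalIntegrable (fun τ : ℝ => (t - τ) ^ (-a) * τ ^ (-b)) volume 0 t := by
  have h₁ : IntervalIntegrable (fun τ : ℝ => (t - τ) ^ (-a) * τ ^ (-b)) volume 0 (t/2) := by
    apply IntervalIntegrable.continuousOn_mul
      (intervalIntegral.intervalIntegrable_rpow' (by linarith))
    apply (continuousOn_const.sub continuousOn_id).rpow_const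
    intro x hx
    rw [Set.uIcc_of_le (by linarith)] at hx
    exact Or.inl (by simp only [Pi.sub_apply, id]; nlinarith [hx.2])
  have h₂ : IntervalIntegrable (fun τ : ℝ => (t - τ) ^ (-a) * τ ^ (-b)) volume (t/2) t := by
    have hi : IntervalIntegrable (fun x : ℝ => x ^ (-a)) volume 0 (t/2) :=
      intervalIntegral.intervalIntegrable_rpow' (by linarith)
    have := (hi.comp_sub_left t).symm
    simp only [sub_zero, show t - t/2 = t/2 by ring] at this
    apply IntervalIntegrable.mul_continuousOn this
    apply continuousOn_id.rpow_const
    intro x hx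
    rw [Set.uIcc_of_le (by linarith)] at hx
    exact Or.inl (by simp only [id]; nlinarith [hx.1])
  exact h₁.trans h₂

lemma betaSubst {a b : ℝ} (t : ℝ) (ht : 0 < t) (hab : a + b = 1) :
    ∫ τ in (0:ℝ)..t, (t - τ) ^ (-a) * τ ^ (-b)
      = ∫ y in (0:ℝ)..1, (1 - y) ^ (-a) * y ^ (-b) := by
  have h1 := intervalIntegral.integral_comp_mul_left (a := (0:ℝ)) (b := (1:ℝ))
    (fun τ : ℝ => (t - τ) ^ (-a) * τ ^ (-b)) (c := t) ht.ne'
  simp only [mul_zero, mul_one] at h1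
  have h2 : ∫ y in (0:ℝ)..1, (t - t * y) ^ (-a) * (t * y) ^ (-b)
      = ∫ y in (0:ℝ)..1, t⁻¹ * ((1 - y) ^ (-a) * y ^ (-b)) := by
    apply intervalIntegral.integral_congr
    intro y hy
    rw [Set.uIcc_of_le (zero_le_one)] at hy
    have hy0 : 0 ≤ y := hy.1
    have hy1 : 0 ≤ 1 - y := by linarith [hy.2]
    have e1 : t - t * y = t * (1 - y) := by ring
    simp only []
    rw [e1, Real.mul_rpow ht.le hy1, Real.mul_rpow ht.le hy0]
    have e2 : t ^ (-a) * t ^ (-b) = t⁻¹ := by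
      rw [← Real.rpow_add ht, show -a + -b = -1 by linarith, Real.rpow_neg_one]
    calc t ^ (-a) * (1 - y) ^ (-a) * (t ^ (-b) * y ^ (-b))
        = (t ^ (-a) * t ^ (-b)) * ((1 - y) ^ (-a) * y ^ (-b)) := by ring
      _ = t⁻¹ * ((1 - y) ^ (-a) * y ^ (-b)) := by rw [e2]
  rw [h2, intervalIntegral.integral_const_mul] at h1
  have := congrArg (fun x => t * x) h1
  simp only [smul_eq_mul] at this ⊢
  field_simp at this
  linarith [this]

theorem stmt_19
    (α p a b M K : ℝ) (hα : α ∈ Set.Ioo (0:ℝ) (5/4))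
    (hp1 : 6 * α - 6 ≤ p) (hp2 : p < 2 * α - 1) (hp3 : -1 < p)
    (ha : a = (p + 1) / (2 * α)) (hb : b = (2 * α - 1 - p) / (2 * α))
    (hM : 0 < M) (hK : 0 < K)
    (U₀ : EuclideanSpace ℝ (Fin 3) → ℂ)
    (hU₀ : ∀ ξ : EuclideanSpace ℝ (Fin 3), ξ ≠ 0 → ‖U₀ ξ‖ ≤ M * ‖ξ‖ ^ (-p))
    (g : ℝ → ℝ)
    (hg_nonneg : ∀ τ : ℝ, 0 ≤ τ → 0 ≤ g τ)
    (hg : ∀ τ : ℝ, 0 ≤ τ → g τ ≤ K * (1 + τ) ^ (-(5 - 4 * α) / (2 * α)))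
    (U : EuclideanSpace ℝ (Fin 3) → ℝ → ℂ)
    (hU : ∀ ξ : EuclideanSpace ℝ (Fin 3), ξ ≠ 0 → ∀ t : ℝ, 0 ≤ t →
      ‖U ξ t‖ ≤ ‖U₀ ξ‖ +
        ∫ τ in (0:ℝ)..t, ‖ξ‖ * Real.exp (-(t - τ) * ‖ξ‖ ^ (2 * α)) * g τ) :
    ∀ t : ℝ, 0 ≤ t → ∀ ξ : EuclideanSpace ℝ (Fin 3), ξ ≠ 0 →
      ‖ξ‖ ^ p * ‖U ξ t‖ ≤
        M + K * (a / Real.exp 1) ^ a * ∫ y in (0:ℝ)..1, (1 - y) ^ (-a) * y ^ (-b) := by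
  obtain ⟨hα0, hα1⟩ := hα
  have h2α : 0 < 2 * α := by linarith
  have ha0 : 0 < a := ha ▸ div_pos (by linarith) h2α
  have ha1 : a < 1 := by rw [ha, div_lt_one h2α]; linarith
  have hb0 : 0 < b := hb ▸ div_pos (by linarith) h2α
  have hb1 : b < 1 := by rw [hb, div_lt_one h2α]; linarith
  have hab : a + b = 1 := by rw [ha, hb]; field_simp; ring
  have haea : 0 ≤ (a / Real.exp 1) ^ a := Real.rpow_nonneg (by positivity) a
  set B := ∫ y in (0:ℝ)..1, (1 - y) ^ (-a) * y ^ (-b) with hBdef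
  have hB0 : 0 ≤ B := by
    apply intervalIntegral.integral_nonneg zero_le_one
    intro y hy
    exact mul_nonneg (Real.rpow_nonneg (by linarith [hy.2]) _) (Real.rpow_nonneg hy.1 _)
  intro t ht ξ hξ
  have hξ0 : 0 < ‖ξ‖ := norm_pos_iff.mpr hξ
  have hξp : 0 ≤ ‖ξ‖ ^ p := Real.rpow_nonneg hξ0.le p
  set s := ‖ξ‖ ^ (2 * α) with hsdef
  have hs : 0 < s := Real.rpow_pos_of_pos hξ0 _
  have hfirst : ‖ξ‖ ^ p * ‖U₀ ξ‖ ≤ M := by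
    calc ‖ξ‖ ^ p * ‖U₀ ξ‖ ≤ ‖ξ‖ ^ p * (M * ‖ξ‖ ^ (-p)) :=
          mul_le_mul_of_nonneg_left (hU₀ ξ hξ) hξp
      _ = M * (‖ξ‖ ^ p * ‖ξ‖ ^ (-p)) := by ring
      _ = M := by rw [← Real.rpow_add hξ0]; simp
  have hkey : ‖ξ‖ ^ p * (∫ τ in (0:ℝ)..t, ‖ξ‖ * Real.exp (-(t - τ) * s) * g τ)
      ≤ K * (a / Real.exp 1) ^ a * B := by
    rcases ht.eq_or_lt with h | h
    · rw [← h, intervalIntegral.integral_same, mul_zero]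
      positivity
    · have hint : IntervalIntegrable (fun τ : ℝ => (t - τ) ^ (-a) * τ ^ (-b)) volume 0 t :=
        betaInt' t ha1 hb1 h
      have hsub : ∫ τ in (0:ℝ)..t, (t - τ) ^ (-a) * τ ^ (-b) = B := betaSubst t h hab
      have hpt : ∀ τ ∈ Set.Ioo (0:ℝ) t,
          ‖ξ‖ ^ p * (‖ξ‖ * Real.exp (-(t - τ) * s) * g τ)
            ≤ K * (a / Real.exp 1) ^ a * ((t - τ) ^ (-a) * τ ^ (-b)) := by
        intro τ hτ
        obtain ⟨hτ0, hτt⟩ := hτ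
        have htτ : 0 < t - τ := by linarith
        have e1 : ‖ξ‖ ^ p * ‖ξ‖ = s ^ a := by
          rw [hsdef, ← Real.rpow_mul hξ0.le,
            show 2 * α * a = p + 1 by rw [ha]; field_simp,
            Real.rpow_add_one hξ0.ne']
        have e2 : s ^ a * Real.exp (-(t - τ) * s) ≤ (a / Real.exp 1) ^ a * (t - τ) ^ (-a) := by
          have h3 : ((t - τ) * s) ^ a * Real.exp (-((t - τ) * s)) ≤ (a / Real.exp 1) ^ a :=
            aux1 ha0 (mul_pos htτ hs)
          have h4 : ((t - τ) * s) ^ a = (t - τ) ^ a * s ^ a := Real.mul_rpow htτ.le hs.le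
          have h6 : (t - τ) ^ (-a) * (t - τ) ^ a = 1 := by
            rw [← Real.rpow_add htτ]; simp
          have h7 := mul_le_mul_of_nonneg_left h3 (Real.rpow_nonneg htτ.le (-a))
          rw [h4] at h7
          calc s ^ a * Real.exp (-(t - τ) * s)
              = (t - τ) ^ (-a) * ((t - τ) ^ a * s ^ a * Real.exp (-((t - τ) * s))) := by
                rw [neg_mul]; rw [← mul_assoc, ← mul_assoc, h6, one_mul]
            _ ≤ (t - τ) ^ (-a) * (a / Real.exp 1) ^ a := h7
            _ = (a / Real.exp 1) ^ a * (t - τ) ^ (-a) := mul_comm _ _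
        have e3 : g τ ≤ K * τ ^ (-b) := by
          have c0 := hg τ hτ0.le
          have c1 : (1 + τ) ^ (-(5 - 4 * α) / (2 * α)) ≤ (1 + τ) ^ (-b) := by
            apply Real.rpow_le_rpow_of_exponent_le (by linarith)
            rw [hb, ← neg_div]
            exact (div_le_div_iff_of_pos_right h2α).2 (by linarith)
          have c2 : (1 + τ) ^ (-b) ≤ τ ^ (-b) :=
            Real.rpow_le_rpow_of_nonpos hτ0 (by linarith) (by linarith)
          calc g τ ≤ K * (1 + τ) ^ (-(5 - 4 * α) / (2 * α)) := c0
            _ ≤ K * (1 + τ) ^ (-b) := mul_le_mul_of_nonneg_left c1 hK.le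
            _ ≤ K * τ ^ (-b) := mul_le_mul_of_nonneg_left c2 hK.le
        have hgτ : 0 ≤ g τ := hg_nonneg τ hτ0.le
        calc ‖ξ‖ ^ p * (‖ξ‖ * Real.exp (-(t - τ) * s) * g τ)
            = (s ^ a * Real.exp (-(t - τ) * s)) * g τ := by rw [← e1]; ring
          _ ≤ ((a / Real.exp 1) ^ a * (t - τ) ^ (-a)) * (K * τ ^ (-b)) := by
              apply mul_le_mul e2 e3 hgτ
              positivity
          _ = K * (a / Real.exp 1) ^ a * ((t - τ) ^ (-a) * τ ^ (-b)) := by ring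
      calc ‖ξ‖ ^ p * ∫ τ in (0:ℝ)..t, ‖ξ‖ * Real.exp (-(t - τ) * s) * g τ
          = ∫ τ in (0:ℝ)..t, ‖ξ‖ ^ p * (‖ξ‖ * Real.exp (-(t - τ) * s) * g τ) :=
            (intervalIntegral.integral_const_mul _ _).symm
        _ = ∫ τ in Set.Ioo (0:ℝ) t, ‖ξ‖ ^ p * (‖ξ‖ * Real.exp (-(t - τ) * s) * g τ) := by
            rw [intervalIntegral.integral_of_le h.le, integral_Ioc_eq_integral_Ioo]
        _ ≤ ∫ τ in Set.Ioo (0:ℝ) t, K * (a / Real.exp 1) ^ a * ((t - τ) ^ (-a) * τ ^ (-b)) := by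
            apply integral_mono_of_nonneg
            · exact (ae_restrict_iff' measurableSet_Ioo).2 (ae_of_all _ fun τ hτ =>
                mul_nonneg hξp (mul_nonneg (mul_nonneg hξ0.le (Real.exp_nonneg _))
                  (hg_nonneg τ hτ.1.le)))
            · exact ((hint.1.mono_set Set.Ioo_subset_Ioc_self).const_mul _)
            · exact (ae_restrict_iff' measurableSet_Ioo).2 (ae_of_all _ hpt)
        _ = K * (a / Real.exp 1) ^ a * ∫ τ in Set.Ioo (0:ℝ) t, (t - τ) ^ (-a) * τ ^ (-b) :=
            integral_const_mul _ _
        _ = K * (a / Real.exp 1) ^ a * B := by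
            rw [← integral_Ioc_eq_integral_Ioo, ← intervalIntegral.integral_of_le h.le, hsub]
  calc ‖ξ‖ ^ p * ‖U ξ t‖
      ≤ ‖ξ‖ ^ p * (‖U₀ ξ‖ + ∫ τ in (0:ℝ)..t, ‖ξ‖ * Real.exp (-(t - τ) * s) * g τ) :=
        mul_le_mul_of_nonneg_left (hU ξ hξ t ht) hξp
    _ = ‖ξ‖ ^ p * ‖U₀ ξ‖
        + ‖ξ‖ ^ p * ∫ τ in (0:ℝ)..t, ‖ξ‖ * Real.exp (-(t - τ) * s) * g τ := mul_add _ _ _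
    _ ≤ M + K * (a / Real.exp 1) ^ a * B := add_le_add hfirst hkey
end
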